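/- arXiv:2107.13188 — 3 statements merged into one kernel-verified Lean document; each statement's English description precedes it below -/
import Mathlib

section
/- Let n ≥ 1, let Θ ∈ ℂ^{n×n} be symmetric with positive definite real part, let ν ∈ ℕⁿ be a multi-index, and let z ∈ ℂ with z ≠ 0 be such that the real part of z²Θ is also positive definite. Then for all r ∈ ℂⁿ: HG_{z²Θ}^ν(r) = (det Θ)^{1/4} · (det(z²Θ))^{−1/4} · (1/z)^{|ν|} · HG_Θ^ν(r/z). -/
open scoped BigOperators
open MeasureTheory Matrix

noncomputable section

namespace AHGPaper

/-- Complex partial derivative in coordinate `j`. -/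
def cpderiv {n : ℕ} (j : Fin n) (f : (Fin n → ℂ) → ℂ) : (Fin n → ℂ) → ℂ :=
  fun x => deriv (fun t : ℂ => f (Function.update x j t)) (x j)

/-- Mixed partial derivative of multi-order `ν`. -/
def mpderiv {n : ℕ} (ν : Fin n → ℕ) (f : (Fin n → ℂ) → ℂ) : (Fin n → ℂ) → ℂ :=
  (List.finRange n).foldr (fun j g => (cpderiv j)^[ν j] g) f

/-- The anisotropic Hermite-Gauss (AHG) function `HG_Θ^ν`. -/
def HG {n : ℕ} (Θ : Matrix (Fin n) (Fin n) ℂ) (ν : Fin n → ℕ) (r : Fin n → ℂ) : ℂ :=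
  (-(1 / (Real.sqrt 2 : ℂ))) ^ (∑ j, ν j) *
    ((∏ j, ((ν j).factorial : ℂ)) ^ (-(1 / 2 : ℂ))) *
    (((Real.pi : ℂ) ^ n * Θ.det) ^ (-(1 / 4 : ℂ))) *
    Complex.exp ((1 / 2 : ℂ) * (r ⬝ᵥ Θ⁻¹.mulVec r)) *
    mpderiv ν (fun x => Complex.exp (-(x ⬝ᵥ Θ⁻¹.mulVec x))) r

/-- The dual anisotropic Hermite-Gauss function `H̃G_Θ^ν`. -/
def HGd {n : ℕ} (Θ : Matrix (Fin n) (Fin n) ℂ) (ν : Fin n → ℕ) (r : Fin n → ℂ) : ℂ :=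
  (-(1 / (Real.sqrt 2 : ℂ))) ^ (∑ j, ν j) *
    ((∏ j, ((ν j).factorial : ℂ)) ^ (-(1 / 2 : ℂ))) *
    (((Real.pi : ℂ) ^ n * Θ.det) ^ (-(1 / 4 : ℂ))) *
    Complex.exp ((1 / 2 : ℂ) * ((Θ⁻¹.mulVec r) ⬝ᵥ Θ.mulVec (Θ⁻¹.mulVec r))) *
    mpderiv ν (fun x => Complex.exp (-(x ⬝ᵥ Θ.mulVec x))) (Θ⁻¹.mulVec r)

/-- Physicists' Hermite polynomial via Rodrigues' formula. -/
def hermiteH (k : ℕ) (z : ℂ) : ℂ :=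
  (-1) ^ k * Complex.exp (z ^ 2) * iteratedDeriv k (fun w => Complex.exp (-(w ^ 2))) z

/-- The `k`-th univariate Hermite-Gauss function `ψ_k`. -/
def psi (k : ℕ) (z : ℂ) : ℂ :=
  ((Real.sqrt Real.pi * 2 ^ k * k.factorial : ℝ) : ℂ) ^ (-(1 / 2 : ℂ)) *
    Complex.exp (-(z ^ 2) / 2) * hermiteH k z

/-- The vector `φ_ν(r)` whose `k`-th entry is `(1/√2)·√(ν_k)·HG_Θ^{ν-ε_k}(r)`. -/
def phiV {n : ℕ} (Θ : Matrix (Fin n) (Fin n) ℂ) (ν : Fin n → ℕ) (r : Fin n → ℂ) :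
    Fin n → ℂ :=
  fun k => (1 / (Real.sqrt 2 : ℂ)) * (Real.sqrt (ν k) : ℂ) *
    HG Θ (fun j => ν j - if j = k then 1 else 0) r

/-- The matrix `Φ_ν(r)`. -/
def PhiM {n : ℕ} (Θ : Matrix (Fin n) (Fin n) ℂ) (ν : Fin n → ℕ) (r : Fin n → ℂ) :
    Matrix (Fin n) (Fin n) ℂ :=
  Matrix.of fun j k =>
    if j = k then
      (Real.sqrt (ν j * (ν j - 1)) : ℂ) * HG Θ (fun l => ν l - if l = j then 2 else 0) r
    else
      (Real.sqrt (ν j * ν k) : ℂ) *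
        HG Θ (fun l => ν l - ((if l = j then 1 else 0) + (if l = k then 1 else 0))) r

/-- The `n`-dimensional linear canonical transform with parameter matrix `[[a,b],[c,d]]`. -/
def LCT {n : ℕ} (a b d : ℂ) (f : (Fin n → ℝ) → ℂ) (ζ : Fin n → ℝ) : ℂ :=
  (1 / (2 * (Real.pi : ℂ) * Complex.I * b)) ^ ((n : ℂ) / 2) *
    Complex.exp (Complex.I * d / (2 * b) * ((fun i => (ζ i : ℂ)) ⬝ᵥ fun i => (ζ i : ℂ))) *
    ∫ r : Fin n → ℝ, f r *
      Complex.exp (-(Complex.I / (2 * b)) *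
        ((fun i => (r i : ℂ)) ⬝ᵥ fun i => 2 * (ζ i : ℂ) - a * (r i : ℂ)))

/-- The `n`-dimensional Fourier transform `(2π)^{-n/2} ∫ f(r) e^{-i ζ·r} dr`. -/
def FT {n : ℕ} (f : (Fin n → ℝ) → ℂ) (ζ : Fin n → ℝ) : ℂ :=
  ((2 * Real.pi : ℝ) : ℂ) ^ (-(n : ℂ) / 2) *
    ∫ r : Fin n → ℝ,
      f r * Complex.exp (-Complex.I * ((fun i => (ζ i : ℂ)) ⬝ᵥ fun i => (r i : ℂ)))

/-- The Wigner-Ville distribution. -/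
def WVD {n : ℕ} (f : (Fin n → ℝ) → ℂ) (r ζ : Fin n → ℝ) : ℂ :=
  ((2 * Real.pi : ℝ) : ℂ) ^ (-(n : ℂ) / 2) *
    ∫ ξ : Fin n → ℝ,
      f (fun i => r i - ξ i / 2) * (starRingEnd ℂ) (f (fun i => r i + ξ i / 2)) *
        Complex.exp (-Complex.I * ((fun i => (ζ i : ℂ)) ⬝ᵥ fun i => (ξ i : ℂ)))

end AHGPaper

open AHGPaper

lemma deriv_comp_div' {z : ℂ} (hz : z ≠ 0) (h : ℂ → ℂ) (x : ℂ) :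
    deriv (fun t => h (t / z)) x = z⁻¹ * deriv h (x / z) := by
  by_cases hd : DifferentiableAt ℂ h (x / z)
  · have h1 : HasDerivAt (fun t : ℂ => t / z) z⁻¹ x := by
      simpa [div_eq_mul_inv] using (hasDerivAt_id x).mul_const z⁻¹
    have h2 : HasDerivAt (fun t => h (t / z)) (deriv h (x / z) * z⁻¹) x :=
      hd.hasDerivAt.comp x h1
    rw [h2.deriv, mul_comm]
  · have hcomp : ¬ DifferentiableAt ℂ (fun t => h (t / z)) x := by
      intro hc
      apply hd
      have hmul : DifferentiableAt ℂ (fun t : ℂ => t * z) (x / z) :=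
        (differentiableAt_id.mul_const z)
      have hx : (x / z) * z = x := div_mul_cancel₀ x hz
      have hc' : DifferentiableAt ℂ (fun t => h (t / z)) ((x / z) * z) := by
        rw [hx]; exact hc
      have : DifferentiableAt ℂ (fun t : ℂ => h (t * z / z)) (x / z) := by
        have h3 := hc'.comp (x / z) hmul
        exact h3
      simpa [mul_div_assoc, div_self hz] using this
    rw [deriv_zero_of_not_differentiableAt hd, deriv_zero_of_not_differentiableAt hcomp]
    ring

variable {n : ℕ}

lemma cpderiv_const_mul (j : Fin n) (c : ℂ) (f : (Fin n → ℂ) → ℂ) :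
    cpderiv j (fun x => c * f x) = fun r => c * cpderiv j f r := by
  funext r
  simp only [cpderiv]
  exact deriv_const_mul_field c

lemma iter_const_mul (j : Fin n) (m : ℕ) (c : ℂ) (f : (Fin n → ℂ) → ℂ) :
    (cpderiv j)^[m] (fun x => c * f x) = fun r => c * (cpderiv j)^[m] f r := by
  induction m generalizing f with
  | zero => rfl
  | succ m ih =>
    rw [Function.iterate_succ_apply, Function.iterate_succ_apply,
      cpderiv_const_mul]
    exact ih _

lemma update_div (r : Fin n → ℂ) (j : Fin n) (z t : ℂ) :
    (fun i => Function.update r j t i / z) = Function.update (fun i => r i / z) j (t / z) := by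
  funext i
  by_cases h : i = j <;> simp [Function.update, h]

lemma cpderiv_scale {z : ℂ} (hz : z ≠ 0) (j : Fin n) (f : (Fin n → ℂ) → ℂ) :
    cpderiv j (fun x => f (fun i => x i / z)) =
      fun r => z⁻¹ * cpderiv j f (fun i => r i / z) := by
  funext r
  simp only [cpderiv]
  have : (fun t : ℂ => f (fun i => Function.update r j t i / z)) =
      fun t : ℂ => f (Function.update (fun i => r i / z) j (t / z)) := by
    funext t; rw [update_div]
  rw [this]
  exact deriv_comp_div' hz (fun s => f (Function.update (fun i => r i / z) j s)) (r j)

lemma iter_scale {z : ℂ} (hz : z ≠ 0) (j : Fin n) (m : ℕ) (f : (Fin n → ℂ) → ℂ) :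
    (cpderiv j)^[m] (fun x => f (fun i => x i / z)) =
      fun r => (z⁻¹) ^ m * (cpderiv j)^[m] f (fun i => r i / z) := by
  induction m generalizing f with
  | zero => simp
  | succ m ih =>
    rw [Function.iterate_succ_apply, cpderiv_scale hz]
    have : (fun r : Fin n → ℂ => z⁻¹ * cpderiv j f (fun i => r i / z)) =
        fun x : Fin n → ℂ => (fun y => z⁻¹ * cpderiv j f y) (fun i => x i / z) := rfl
    rw [this, ih (fun y => z⁻¹ * cpderiv j f y), Function.iterate_succ_apply]
    funext r
    rw [iter_const_mul]
    ring

lemma foldr_scale {z : ℂ} (hz : z ≠ 0) (ν : Fin n → ℕ) (L : List (Fin n))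
    (f : (Fin n → ℂ) → ℂ) :
    L.foldr (fun j g => (cpderiv j)^[ν j] g) (fun x => f (fun i => x i / z)) =
      fun r => (z⁻¹) ^ ((L.map ν).sum) *
        (L.foldr (fun j g => (cpderiv j)^[ν j] g) f) (fun i => r i / z) := by
  induction L generalizing f with
  | nil => simp
  | cons j L ih =>
    rw [List.foldr_cons, ih f, List.foldr_cons]
    have : (fun r : Fin n → ℂ => z⁻¹ ^ (L.map ν).sum *
        (L.foldr (fun j g => (cpderiv j)^[ν j] g) f) (fun i => r i / z)) =
        fun x : Fin n → ℂ => (fun y => z⁻¹ ^ (L.map ν).sum *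
          (L.foldr (fun j g => (cpderiv j)^[ν j] g) f) y) (fun i => x i / z) := rfl
    rw [this, iter_const_mul, ]
    funext r
    rw [iter_scale hz]
    simp [pow_add]
    ring

lemma mpderiv_scale {z : ℂ} (hz : z ≠ 0) (ν : Fin n → ℕ) (f : (Fin n → ℂ) → ℂ)
    (r : Fin n → ℂ) :
    mpderiv ν (fun x => f (fun i => x i / z)) r =
      (z⁻¹) ^ (∑ j, ν j) * mpderiv ν f (fun i => r i / z) := by
  have hs : ((List.finRange n).map ν).sum = ∑ j, ν j := by
    rw [Fin.sum_univ_def]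
  rw [mpderiv, foldr_scale hz, hs, mpderiv]

lemma smulInvAux {z : ℂ} (hz : z ≠ 0) {A : Matrix (Fin n) (Fin n) ℂ}
    (hd : IsUnit A.det) : ((z ^ 2) • A)⁻¹ = (z ^ 2)⁻¹ • A⁻¹ := by
  have hz2 : (z ^ 2) ≠ 0 := pow_ne_zero _ hz
  haveI : Invertible (z ^ 2) := invertibleOfNonzero hz2
  rw [Matrix.inv_smul (k := z ^ 2) (A := A) hd, invOf_eq_right_inv (mul_inv_cancel₀ hz2)]

lemma dot_scale {z : ℂ} (hz : z ≠ 0) (A : Matrix (Fin n) (Fin n) ℂ) (x : Fin n → ℂ) :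
    x ⬝ᵥ ((z ^ 2)⁻¹ • A).mulVec x =
      (fun j => x j / z) ⬝ᵥ A.mulVec (fun j => x j / z) := by
  simp only [Matrix.mulVec, dotProduct, Matrix.smul_apply, smul_eq_mul]
  apply Finset.sum_congr rfl
  intro i _
  rw [Finset.mul_sum, Finset.mul_sum]
  apply Finset.sum_congr rfl
  intro j _
  simp only [div_eq_mul_inv, sq, mul_inv]
  ring

lemma cpow_real_mul {a : ℝ} (ha : 0 < a) (w s : ℂ) (hs : s ≠ 0) :
    ((a : ℂ) * w) ^ s = (a : ℂ) ^ s * w ^ s := by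
  by_cases hw : w = 0
  · simp [hw, Complex.zero_cpow hs]
  · have ha' : (a : ℂ) ≠ 0 := Complex.ofReal_ne_zero.mpr ha.ne'
    rw [Complex.cpow_def_of_ne_zero (mul_ne_zero ha' hw), Complex.log_ofReal_mul ha hw,
      add_mul, Complex.exp_add, Complex.cpow_def_of_ne_zero ha',
      Complex.cpow_def_of_ne_zero hw, Complex.ofReal_log ha.le]

/-- scaling the anisotropy matrix by `z²`. -/
theorem ahg_scaling (n : ℕ) (hn : 1 ≤ n) (Θ : Matrix (Fin n) (Fin n) ℂ)
    (hsym : Θ.IsSymm) (hpd : (Θ.map Complex.re).PosDef)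
    (ν : Fin n → ℕ) (z : ℂ) (hz : z ≠ 0)
    (hpd' : (((z ^ 2) • Θ).map Complex.re).PosDef) (r : Fin n → ℂ) :
    HG ((z ^ 2) • Θ) ν r =
      Θ.det ^ (1 / 4 : ℂ) * ((z ^ 2) • Θ).det ^ (-(1 / 4) : ℂ) *
        (1 / z) ^ (∑ j, ν j) * HG Θ ν (fun j => r j / z) := by
  by_cases hd : IsUnit Θ.det
  · have hdet : Θ.det ≠ 0 := hd.ne_zero
    have hinv : ((z ^ 2) • Θ)⁻¹ = (z ^ 2)⁻¹ • Θ⁻¹ := smulInvAux hz hd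
    have hexp : r ⬝ᵥ ((z ^ 2) • Θ)⁻¹.mulVec r =
        (fun j => r j / z) ⬝ᵥ Θ⁻¹.mulVec (fun j => r j / z) := by
      rw [hinv]; exact dot_scale hz Θ⁻¹ r
    have hfun : (fun x : Fin n → ℂ => Complex.exp (-(x ⬝ᵥ ((z ^ 2) • Θ)⁻¹.mulVec x))) =
        fun x => (fun y => Complex.exp (-(y ⬝ᵥ Θ⁻¹.mulVec y))) (fun i => x i / z) := by
      funext x
      rw [hinv, dot_scale hz]
    have hm : mpderiv ν (fun x => Complex.exp (-(x ⬝ᵥ ((z ^ 2) • Θ)⁻¹.mulVec x))) r =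
        (z⁻¹) ^ (∑ j, ν j) *
          mpderiv ν (fun y => Complex.exp (-(y ⬝ᵥ Θ⁻¹.mulVec y))) (fun i => r i / z) := by
      rw [hfun]
      exact mpderiv_scale hz ν (fun y => Complex.exp (-(y ⬝ᵥ Θ⁻¹.mulVec y))) r
    have hpi : (0 : ℝ) < Real.pi ^ n := pow_pos Real.pi_pos n
    have hpin : ((Real.pi : ℂ)) ^ n = ((Real.pi ^ n : ℝ) : ℂ) := by push_cast; ring
    have hsplit : ∀ w : ℂ, ((Real.pi : ℂ) ^ n * w) ^ (-(1 / 4) : ℂ) =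
        ((Real.pi ^ n : ℝ) : ℂ) ^ (-(1 / 4) : ℂ) * w ^ (-(1 / 4) : ℂ) := fun w => by
      rw [hpin]; exact cpow_real_mul hpi w _ (by norm_num)
    have hcancel : Θ.det ^ (1 / 4 : ℂ) * Θ.det ^ (-(1 / 4) : ℂ) = 1 := by
      rw [← Complex.cpow_add _ _ hdet]
      norm_num
    have hq : Θ.det ^ (-(1 / 4) : ℂ) ≠ 0 := by
      intro h0
      rw [h0, mul_zero] at hcancel
      exact one_ne_zero hcancel.symm
    have hp : Θ.det ^ (1 / 4 : ℂ) = (Θ.det ^ (-(1 / 4) : ℂ))⁻¹ :=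
      eq_inv_of_mul_eq_one_left hcancel
    have hs2 : (Real.sqrt 2 : ℂ) ≠ 0 := Complex.ofReal_ne_zero.mpr (by positivity)
    rw [HG, HG, hm, hexp, hsplit, hsplit, hp, one_div]
    set S := ∑ j, ν j with hS
    set M := mpderiv ν (fun y => Complex.exp (-(y ⬝ᵥ Θ⁻¹.mulVec y))) (fun i => r i / z)
      with hM
    set E := Complex.exp ((1 / 2 : ℂ) *
      ((fun j => r j / z) ⬝ᵥ Θ⁻¹.mulVec (fun j => r j / z))) with hE
    set W := ((z ^ 2) • Θ).det ^ (-(1 / 4) : ℂ) with hW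
    set P := ((Real.pi ^ n : ℝ) : ℂ) ^ (-(1 / 4) : ℂ) with hP
    set Q := Θ.det ^ (-(1 / 4) : ℂ) with hQ
    field_simp
  · have hd0 : Θ.det = 0 := by
      simpa [isUnit_iff_ne_zero, not_not] using hd
    have hd0' : ((z ^ 2) • Θ).det = 0 := by
      rw [Matrix.det_smul, hd0, mul_zero]
    simp only [HG, hd0, hd0', mul_zero]
    rw [Complex.zero_cpow (by norm_num : (-(1/4) : ℂ) ≠ 0),
      Complex.zero_cpow (by norm_num : ((1/4) : ℂ) ≠ 0)]
    ring
end
end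

section
/- Let n ≥ 1, let Θ ∈ ℂ^{n×n} be symmetric with positive definite real part, let ν ∈ ℕⁿ, and let q_jᵀ denote the j-th row of Θ⁻¹. Then for every r ∈ ℝⁿ and every 1 ≤ j ≤ n: (∂/∂r_j) HG_Θ^ν(r) + (q_j·r)·HG_Θ^ν(r) = 2·(q_j·φ_ν(r)). -/
open scoped BigOperators
open MeasureTheory Matrix

noncomputable section

open AHGPaper

namespace AHGProof

open MvPolynomial Matrix

variable {n : ℕ}

lemma pderiv_comm' (i j : Fin n) (p : MvPolynomial (Fin n) ℂ) :
    pderiv i (pderiv j p) = pderiv j (pderiv i p) := by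
  induction p using MvPolynomial.induction_on with
  | C a => simp [pderiv_C]
  | add p q hp hq => simp [map_add, hp, hq]
  | mul_X p k hp =>
    simp only [pderiv_mul, map_add, pderiv_mul, hp]
    rcases eq_or_ne k i with rfl | hki <;> rcases eq_or_ne k j with rfl | hkj <;>
      simp_all [pderiv_X_self, pderiv_X_of_ne, pderiv_C]

/-- The linear polynomial `∑ k, Q j k • X k`. -/
def linP (Q : Matrix (Fin n) (Fin n) ℂ) (j : Fin n) : MvPolynomial (Fin n) ℂ :=
  ∑ k, C (Q j k) * X k

lemma pderiv_linP (Q : Matrix (Fin n) (Fin n) ℂ) (i j : Fin n) :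
    pderiv j (linP Q i) = C (Q i j) := by
  simp only [linP, map_sum, pderiv_C_mul]
  rw [Finset.sum_eq_single j]
  · simp
  · intro k _ hk; simp [pderiv_X_of_ne hk]
  · simp

/-- The operator `p ↦ ∂ⱼ p - 2 ℓⱼ p`. -/
def Tend (Q : Matrix (Fin n) (Fin n) ℂ) (j : Fin n) :
    Module.End ℂ (MvPolynomial (Fin n) ℂ) :=
  (pderiv j).toLinearMap - LinearMap.mulLeft ℂ (C 2 * linP Q j)

lemma Tend_apply (Q : Matrix (Fin n) (Fin n) ℂ) (j : Fin n) (p : MvPolynomial (Fin n) ℂ) :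
    Tend Q j p = pderiv j p - C 2 * linP Q j * p := rfl

lemma pderiv_Tend (Q : Matrix (Fin n) (Fin n) ℂ) (i j : Fin n) (p : MvPolynomial (Fin n) ℂ) :
    pderiv j (Tend Q i p) = Tend Q i (pderiv j p) - C (2 * Q i j) * p := by
  simp only [Tend_apply, map_sub, pderiv_mul, pderiv_C_mul, pderiv_linP, pderiv_comm' j i,
    pderiv_C, _root_.map_mul]
  ring

lemma Tend_C_mul (Q : Matrix (Fin n) (Fin n) ℂ) (i : Fin n) (c : ℂ)
    (p : MvPolynomial (Fin n) ℂ) : Tend Q i (C c * p) = C c * Tend Q i p := by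
  simp only [Tend_apply, pderiv_C_mul]; ring

lemma Tend_pow_C_mul (Q : Matrix (Fin n) (Fin n) ℂ) (i : Fin n) (m : ℕ) (c : ℂ)
    (p : MvPolynomial (Fin n) ℂ) : (Tend Q i ^ m) (C c * p) = C c * (Tend Q i ^ m) p := by
  induction m with
  | zero => simp
  | succ m ih => rw [pow_succ', Module.End.mul_apply, ih, Tend_C_mul, ← Module.End.mul_apply,
      ← pow_succ']

lemma pderiv_Tend_pow (Q : Matrix (Fin n) (Fin n) ℂ) (i j : Fin n) (m : ℕ)
    (p : MvPolynomial (Fin n) ℂ) :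
    pderiv j ((Tend Q i ^ m) p) =
      (Tend Q i ^ m) (pderiv j p) - (m : ℂ) • (C (2 * Q i j) * (Tend Q i ^ (m - 1)) p) := by
  induction m generalizing p with
  | zero => simp
  | succ m ih =>
    have h1 : (Tend Q i ^ (m + 1)) p = (Tend Q i ^ m) (Tend Q i p) := by
      rw [pow_succ, Module.End.mul_apply]
    rw [h1, ih, pderiv_Tend, map_sub, Tend_pow_C_mul,
      ← Module.End.mul_apply (Tend Q i ^ m) (Tend Q i), ← pow_succ, Nat.add_sub_cancel]
    rcases Nat.eq_zero_or_pos m with rfl | hm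
    · simp
    · have h2 : (Tend Q i ^ (m - 1)) (Tend Q i p) = (Tend Q i ^ m) p := by
        rw [← Module.End.mul_apply, ← pow_succ, Nat.sub_add_cancel hm]
      rw [h2]
      push_cast
      module

/-- Decrement a multi-index at `k` (truncated). -/
def sub1 (ν : Fin n → ℕ) (k : Fin n) : Fin n → ℕ := fun l => ν l - if l = k then 1 else 0

lemma sub1_apply_ne {ν : Fin n → ℕ} {k i : Fin n} (h : i ≠ k) : sub1 ν k i = ν i := by
  simp [sub1, h]

lemma sub1_apply_self (ν : Fin n → ℕ) (k : Fin n) : sub1 ν k k = ν k - 1 := by simp [sub1]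

/-- The composite operator along a list of indices. -/
def Fl (Q : Matrix (Fin n) (Fin n) ℂ) (ν : Fin n → ℕ) (L : List (Fin n)) :
    Module.End ℂ (MvPolynomial (Fin n) ℂ) :=
  L.foldr (fun i E => Tend Q i ^ ν i * E) 1

lemma Fl_nil (Q : Matrix (Fin n) (Fin n) ℂ) (ν : Fin n → ℕ) : Fl Q ν [] = 1 := rfl

lemma Fl_cons (Q : Matrix (Fin n) (Fin n) ℂ) (ν : Fin n → ℕ) (i : Fin n) (L : List (Fin n)) :
    Fl Q ν (i :: L) = Tend Q i ^ ν i * Fl Q ν L := rfl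

lemma Fl_congr {Q : Matrix (Fin n) (Fin n) ℂ} {ν ν' : Fin n → ℕ} {L : List (Fin n)}
    (h : ∀ i ∈ L, ν i = ν' i) : Fl Q ν L = Fl Q ν' L := by
  induction L with
  | nil => rfl
  | cons i L ih =>
    rw [Fl_cons, Fl_cons, h i (by simp), ih fun i hi => h i (by simp [hi])]

lemma pderiv_Fl (Q : Matrix (Fin n) (Fin n) ℂ) (ν : Fin n → ℕ) (j : Fin n)
    (L : List (Fin n)) (hL : L.Nodup) (p : MvPolynomial (Fin n) ℂ) :
    pderiv j (Fl Q ν L p) = Fl Q ν L (pderiv j p)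
      - ∑ k ∈ L.toFinset, (ν k : ℂ) • (C (2 * Q k j) * Fl Q (sub1 ν k) L p) := by
  induction L with
  | nil => simp [Fl_nil]
  | cons i L ih =>
    obtain ⟨hiL, hL⟩ := List.nodup_cons.mp hL
    rw [Fl_cons, Module.End.mul_apply, pderiv_Tend_pow, ih hL, map_sub, map_sum,
      List.toFinset_cons, Finset.sum_insert (by simpa using hiL)]
    have e1 : ∀ k ∈ L.toFinset,
        (Tend Q i ^ ν i) ((ν k : ℂ) • (C (2 * Q k j) * Fl Q (sub1 ν k) L p)) =
          (ν k : ℂ) • (C (2 * Q k j) * Fl Q (sub1 ν k) (i :: L) p) := by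
      intro k hk
      have hik : i ≠ k := fun h => hiL (h ▸ List.mem_toFinset.mp hk)
      rw [_root_.map_smul, Tend_pow_C_mul, Fl_cons, Module.End.mul_apply, sub1_apply_ne hik]
    have e2 : (Tend Q i ^ (ν i - 1)) (Fl Q ν L p) = Fl Q (sub1 ν i) (i :: L) p := by
      rw [Fl_cons, Module.End.mul_apply, sub1_apply_self,
        Fl_congr fun l hl => (sub1_apply_ne (fun h : l = i => hiL (h ▸ hl))).symm]
    rw [Finset.sum_congr rfl e1, e2, Fl_cons]
    simp only [Module.End.mul_apply]
    abel

lemma eval_update_hasDerivAt (p : MvPolynomial (Fin n) ℂ) (x : Fin n → ℂ) (j : Fin n) :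
    HasDerivAt (fun t => eval (Function.update x j t) p) (eval x (pderiv j p)) (x j) := by
  induction p using MvPolynomial.induction_on with
  | C a => simpa [pderiv_C] using hasDerivAt_const (x j) a
  | add p q hp hq => simpa [map_add] using hp.fun_add hq
  | mul_X p k hp =>
    simp only [eval_mul, eval_X, Function.update_apply, pderiv_mul]
    rcases eq_or_ne k j with rfl | hkj
    · simpa [Function.update_eq_self, pderiv_X_self, mul_comm] using hp.fun_mul (hasDerivAt_id (x k))
    · simpa [hkj, pderiv_X_of_ne hkj, Function.update_eq_self] using hp.mul_const (x k)

lemma quad_update_hasDerivAt (Q : Matrix (Fin n) (Fin n) ℂ) (x : Fin n → ℂ) (j : Fin n) :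
    HasDerivAt
      (fun t => (Function.update x j t) ⬝ᵥ Q.mulVec (Function.update x j t))
      (Q.mulVec x j + Qᵀ.mulVec x j) (x j) := by
  have key : ∀ t : ℂ, (Function.update x j t) ⬝ᵥ Q.mulVec (Function.update x j t) =
      ∑ i, ∑ k, Function.update x j t i * (Q i k * Function.update x j t k) := by
    intro t
    simp [dotProduct, Matrix.mulVec, Finset.mul_sum]
  simp only [key]
  have hco : ∀ i : Fin n, HasDerivAt (fun t : ℂ => Function.update x j t i)
      (if i = j then 1 else 0) (x j) := by
    intro i
    rcases eq_or_ne i j with rfl | h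
    · simpa [Function.update_self] using hasDerivAt_id' (x i)
    · simpa [Function.update_apply, h] using hasDerivAt_const (x j) (x i)
  have hterm : ∀ i k : Fin n, HasDerivAt
      (fun t : ℂ => Function.update x j t i * (Q i k * Function.update x j t k))
      ((if i = j then 1 else 0) * (Q i k * x k) + x i * (Q i k * (if k = j then 1 else 0)))
      (x j) := by
    intro i k
    have := (hco i).fun_mul ((hco k).const_mul (Q i k))
    simpa [Function.update_eq_self] using this
  have hsum := HasDerivAt.fun_sum (fun i (_ : i ∈ Finset.univ) =>
    HasDerivAt.fun_sum (fun k (_ : k ∈ Finset.univ) => hterm i k))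
  refine hsum.congr_deriv ?_
  simp only [Finset.sum_add_distrib, ite_mul, mul_ite, one_mul, zero_mul, mul_one, mul_zero]
  have e1 : (∑ i : Fin n, ∑ k : Fin n, if i = j then Q i k * x k else 0) = Q.mulVec x j := by
    rw [Finset.sum_eq_single j (fun i _ hi => by simp [hi]) (by simp)]
    simp [Matrix.mulVec, dotProduct]
  have e2 : (∑ i : Fin n, ∑ k : Fin n, if k = j then x i * Q i k else 0) = Qᵀ.mulVec x j := by
    simp [Finset.sum_ite_eq', Matrix.mulVec, dotProduct, Matrix.transpose_apply, mul_comm]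
  rw [e1, e2]

lemma eval_linP (Q : Matrix (Fin n) (Fin n) ℂ) (j : Fin n) (x : Fin n → ℂ) :
    eval x (linP Q j) = Q.mulVec x j := by
  simp [linP, Matrix.mulVec, dotProduct]

/-- Key analytic step: `cpderiv` acts on `p · e^{-xᵀQx}` as `Tend`. -/
lemma cpderiv_eval_mul (Q : Matrix (Fin n) (Fin n) ℂ) (hQ : Qᵀ = Q)
    (p : MvPolynomial (Fin n) ℂ) (j : Fin n) :
    cpderiv j (fun x => eval x p * Complex.exp (-(x ⬝ᵥ Q.mulVec x)))
      = fun x => eval x (Tend Q j p) * Complex.exp (-(x ⬝ᵥ Q.mulVec x)) := by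
  funext x
  have h2 := quad_update_hasDerivAt Q x j
  rw [hQ] at h2
  have h3 := h2.fun_neg.cexp
  have h := (eval_update_hasDerivAt p x j).fun_mul h3
  simp only [Function.update_eq_self] at h
  rw [cpderiv, h.deriv, Tend_apply, map_sub, eval_mul, eval_mul, eval_C, eval_linP]
  ring

/-- Iterated `cpderiv` along a list acts polynomially on `p · e^{-xᵀQx}`. -/
lemma foldr_cpderiv_eval_mul (Q : Matrix (Fin n) (Fin n) ℂ) (hQ : Qᵀ = Q) (ν : Fin n → ℕ)
    (L : List (Fin n)) (p : MvPolynomial (Fin n) ℂ) :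
    L.foldr (fun j g => (cpderiv j)^[ν j] g)
        (fun x => eval x p * Complex.exp (-(x ⬝ᵥ Q.mulVec x)))
      = fun x => eval x (Fl Q ν L p) * Complex.exp (-(x ⬝ᵥ Q.mulVec x)) := by
  induction L generalizing p with
  | nil => simp [Fl]
  | cons i L ih =>
    rw [List.foldr_cons, ih p]
    have hsc : Function.Semiconj
        (fun q : MvPolynomial (Fin n) ℂ =>
          (fun x => eval x q * Complex.exp (-(x ⬝ᵥ Q.mulVec x))))
        (fun q => Tend Q i q) (cpderiv i) := fun q => (cpderiv_eval_mul Q hQ q i).symm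
    have hpow : (fun q => Tend Q i q)^[ν i] ((Fl Q ν L) p) = Fl Q ν (i :: L) p := by
      rw [show Fl Q ν (i :: L) = Tend Q i ^ ν i * Fl Q ν L from rfl, Module.End.mul_apply,
        ← Module.End.pow_apply]
    have h5 := (hsc.iterate_right (ν i)) (Fl Q ν L p)
    rw [hpow] at h5
    exact h5.symm

lemma mpderiv_eval (Q : Matrix (Fin n) (Fin n) ℂ) (hQ : Qᵀ = Q) (ν : Fin n → ℕ) :
    mpderiv ν (fun x => Complex.exp (-(x ⬝ᵥ Q.mulVec x)))
      = fun x => eval x (Fl Q ν (List.finRange n) 1) * Complex.exp (-(x ⬝ᵥ Q.mulVec x)) := by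
  rw [mpderiv, show (fun x : Fin n → ℂ => Complex.exp (-(x ⬝ᵥ Q.mulVec x)))
      = fun x => eval x (1 : MvPolynomial (Fin n) ℂ) * Complex.exp (-(x ⬝ᵥ Q.mulVec x)) by
    funext x; simp, foldr_cpderiv_eval_mul Q hQ ν]

lemma cpow_neg_half_natCast (N : ℕ) :
    ((N : ℂ)) ^ (-(1/2 : ℂ)) = (((Real.sqrt N)⁻¹ : ℝ) : ℂ) := by
  rw [show ((N:ℂ)) = (((N:ℝ):ℂ)) by norm_cast,
    show (-(1/2 : ℂ)) = ((-(1/2 : ℝ) : ℝ) : ℂ) by norm_num,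
    ← Complex.ofReal_cpow (Nat.cast_nonneg N)]
  rw [Real.rpow_neg (Nat.cast_nonneg N), Real.sqrt_eq_rpow]

lemma const_ratio (ν : Fin n → ℕ) (k : Fin n) :
    (-(1 / (Real.sqrt 2 : ℂ))) ^ (∑ j, ν j) *
        ((∏ j, ((ν j).factorial : ℂ)) ^ (-(1/2 : ℂ))) * (-2 * (ν k : ℂ)) =
      2 * ((1 / (Real.sqrt 2 : ℂ)) * (Real.sqrt (ν k) : ℂ)) *
        ((-(1 / (Real.sqrt 2 : ℂ))) ^ (∑ j, sub1 ν k j) *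
          ((∏ j, (((sub1 ν k j)).factorial : ℂ)) ^ (-(1/2 : ℂ)))) := by
  rcases Nat.eq_zero_or_pos (ν k) with h0 | hpos
  · simp [h0]
  obtain ⟨m, hm⟩ : ∃ m, ν k = m + 1 := ⟨ν k - 1, (Nat.succ_pred_eq_of_pos hpos).symm⟩
  have hoff : ∀ l, l ≠ k → sub1 ν k l = ν l := fun l hl => by simp [sub1, hl]
  have hk' : sub1 ν k k = m := by simp [sub1, hm]
  have hsum : ∑ j, ν j = (∑ j, sub1 ν k j) + 1 := by
    rw [← Finset.add_sum_erase _ ν (Finset.mem_univ k), ← Finset.add_sum_erase _ (sub1 ν k)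
      (Finset.mem_univ k), hk', hm, Finset.sum_congr rfl
        fun l hl => hoff l (Finset.ne_of_mem_erase hl)]
    ring
  have herase : (∏ l ∈ Finset.univ.erase k, (ν l).factorial)
      = ∏ l ∈ Finset.univ.erase k, (sub1 ν k l).factorial :=
    Finset.prod_congr rfl fun l hl => by rw [hoff l (Finset.ne_of_mem_erase hl)]
  have hprod : (∏ j, (ν j).factorial) = (m + 1) * ∏ j, (sub1 ν k j).factorial := by
    rw [← Finset.mul_prod_erase _ _ (Finset.mem_univ k),
      ← Finset.mul_prod_erase _ (fun j => (sub1 ν k j).factorial) (Finset.mem_univ k), hk', hm,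
      Nat.factorial_succ, mul_assoc, herase]
  have hc1 : (∏ j, ((ν j).factorial : ℂ)) = ((∏ j, (ν j).factorial : ℕ) : ℂ) := by push_cast; rfl
  have hc2 : (∏ j, (((sub1 ν k j)).factorial : ℂ))
      = ((∏ j, (sub1 ν k j).factorial : ℕ) : ℂ) := by push_cast; rfl
  set P : ℕ := ∏ j, (sub1 ν k j).factorial with hP
  have hPpos : 0 < P := Finset.prod_pos fun _ _ => Nat.factorial_pos _
  rw [hc1, hc2, hprod, hsum, cpow_neg_half_natCast, cpow_neg_half_natCast, hm]
  have hsqmul : Real.sqrt ((m + 1) * P : ℕ) = Real.sqrt (m + 1 : ℕ) * Real.sqrt P := by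
    push_cast
    exact Real.sqrt_mul (by positivity) _
  rw [hsqmul]
  have h1 : (Real.sqrt (m + 1 : ℕ) : ℂ) ≠ 0 := by
    simp only [ne_eq, Complex.ofReal_eq_zero]
    positivity
  have h2 : (Real.sqrt P : ℂ) ≠ 0 := by
    simp only [ne_eq, Complex.ofReal_eq_zero]
    have : (0:ℝ) < P := by exact_mod_cast hPpos
    positivity
  have h3 : ((Real.sqrt 2 : ℝ) : ℂ) ≠ 0 := by
    simp only [ne_eq, Complex.ofReal_eq_zero]
    positivity
  have hss : (Real.sqrt (m + 1 : ℕ) : ℂ) * (Real.sqrt (m + 1 : ℕ) : ℂ) = ((m + 1 : ℕ) : ℂ) := by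
    rw [← Complex.ofReal_mul, Real.mul_self_sqrt (Nat.cast_nonneg _)]
    norm_cast
  rw [pow_succ, ← hss]
  push_cast at h1 h2 ⊢
  field_simp

/-- The AHG function written as polynomial times Gaussians. -/
lemma HG_eq (Θ : Matrix (Fin n) (Fin n) ℂ) (hQ : Θ⁻¹ᵀ = Θ⁻¹) (ν : Fin n → ℕ) :
    HG Θ ν = fun x =>
      ((-(1 / (Real.sqrt 2 : ℂ))) ^ (∑ j, ν j) *
          ((∏ j, ((ν j).factorial : ℂ)) ^ (-(1 / 2 : ℂ))) *
          (((Real.pi : ℂ) ^ n * Θ.det) ^ (-(1 / 4 : ℂ)))) *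
        (Complex.exp ((1 / 2 : ℂ) * (x ⬝ᵥ Θ⁻¹.mulVec x)) *
          (eval x (Fl Θ⁻¹ ν (List.finRange n) 1) *
            Complex.exp (-(x ⬝ᵥ Θ⁻¹.mulVec x)))) := by
  funext x
  rw [HG, mpderiv_eval Θ⁻¹ hQ ν]
  ring

end AHGProof

open AHGProof MvPolynomial in
/-- partial derivative identity for the AHG function. -/
theorem ahg_partial_deriv (n : ℕ) (hn : 1 ≤ n) (Θ : Matrix (Fin n) (Fin n) ℂ)
    (hsym : Θ.IsSymm) (hpd : (Θ.map Complex.re).PosDef)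
    (ν : Fin n → ℕ) (r : Fin n → ℝ) (j : Fin n) :
    cpderiv j (HG Θ ν) (fun i => (r i : ℂ)) +
        ((Θ⁻¹ j) ⬝ᵥ fun i => (r i : ℂ)) * HG Θ ν (fun i => (r i : ℂ)) =
      2 * ((Θ⁻¹ j) ⬝ᵥ phiV Θ ν (fun i => (r i : ℂ))) := by
  classical
  set Q : Matrix (Fin n) (Fin n) ℂ := Θ⁻¹ with hQdef
  have hQ : Qᵀ = Q := by
    rw [hQdef, Matrix.transpose_nonsing_inv, hsym.eq]
  set y : Fin n → ℂ := fun i => (r i : ℂ) with hy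
  set K : ℂ := ((Real.pi : ℂ) ^ n * Θ.det) ^ (-(1 / 4 : ℂ)) with hK
  set A : ℂ := -(1 / (Real.sqrt 2 : ℂ)) with hA
  set E2 : ℂ := Complex.exp ((1 / 2 : ℂ) * (y ⬝ᵥ Q.mulVec y)) with hE2
  set E3 : ℂ := Complex.exp (-(y ⬝ᵥ Q.mulVec y)) with hE3
  have hHG : ∀ μ : Fin n → ℕ, HG Θ μ y =
      (A ^ (∑ j, μ j) * ((∏ j, ((μ j).factorial : ℂ)) ^ (-(1 / 2 : ℂ))) * K) *
        (E2 * (eval y (Fl Q μ (List.finRange n) 1) * E3)) := fun μ => by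
    rw [HG_eq Θ hQ μ]
  -- compute the partial derivative of HG
  have hq := quad_update_hasDerivAt Q y j
  rw [hQ] at hq
  have hexp1 := (hq.const_mul ((1:ℂ)/2)).cexp
  have heval := eval_update_hasDerivAt (Fl Q ν (List.finRange n) 1) y j
  have hexp2 := hq.fun_neg.cexp
  have hder := hexp1.fun_mul (heval.fun_mul hexp2)
  simp only [Function.update_eq_self] at hder
  have hcp : cpderiv j (HG Θ ν) y =
      (A ^ (∑ j, ν j) * ((∏ j, ((ν j).factorial : ℂ)) ^ (-(1 / 2 : ℂ))) * K) *
        (E2 * ((1:ℂ)/2 * (Q.mulVec y j + Q.mulVec y j)) *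
            (eval y (Fl Q ν (List.finRange n) 1) * E3) +
          E2 * (eval y (pderiv j (Fl Q ν (List.finRange n) 1)) * E3 +
            eval y (Fl Q ν (List.finRange n) 1) * (E3 * (-(Q.mulVec y j + Q.mulVec y j))))) := by
    rw [cpderiv, HG_eq Θ hQ ν]
    rw [deriv_const_mul_field]
    rw [hder.deriv]
  -- the dot products
  have hdot : (Θ⁻¹ j) ⬝ᵥ y = Q.mulVec y j := rfl
  have hdot2 : (Θ⁻¹ j) ⬝ᵥ phiV Θ ν y = ∑ k, Q j k * phiV Θ ν y k := rfl
  rw [hcp, hHG ν, hdot, hdot2]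
  -- rewrite the derivative of the polynomial
  have hpd1 : pderiv j (Fl Q ν (List.finRange n) 1) =
      - ∑ k, (ν k : ℂ) • (C (2 * Q k j) * Fl Q (sub1 ν k) (List.finRange n) 1) := by
    rw [pderiv_Fl Q ν j (List.finRange n) (List.nodup_finRange n), pderiv_one, map_zero,
      List.toFinset_finRange, zero_sub]
  rw [hpd1]
  simp only [map_neg, map_sum, smul_eval, eval_mul, eval_C]
  set c : ℂ := A ^ (∑ j, ν j) * ((∏ j, ((ν j).factorial : ℂ)) ^ (-(1 / 2 : ℂ))) * K with hc
  set Pv : ℂ := eval y (Fl Q ν (List.finRange n) 1) with hPv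
  have hfinal : ∀ k : Fin n,
      (-(c * E2 * E3)) *
          ((ν k : ℂ) * (2 * Q k j * eval y (Fl Q (sub1 ν k) (List.finRange n) 1)))
        = 2 * (Q j k * phiV Θ ν y k) := by
    intro k
    have hphik : phiV Θ ν y k = (1 / (Real.sqrt 2 : ℂ)) * (Real.sqrt (ν k) : ℂ) *
        ((A ^ (∑ j, sub1 ν k j) *
            ((∏ j, (((sub1 ν k j)).factorial : ℂ)) ^ (-(1 / 2 : ℂ))) * K) *
          (E2 * (eval y (Fl Q (sub1 ν k) (List.finRange n) 1) * E3))) := by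
      rw [phiV]
      rw [show (fun l => ν l - if l = k then 1 else 0) = sub1 ν k from rfl, hHG (sub1 ν k)]
    rw [hphik]
    have hQkj : Q k j = Q j k := by rw [← Matrix.transpose_apply Q j k, hQ]
    have key := const_ratio ν k
    rw [hc, hA]
    calc -((-(1 / (Real.sqrt 2 : ℂ))) ^ (∑ j, ν j) *
            ((∏ j, ((ν j).factorial : ℂ)) ^ (-(1 / 2 : ℂ))) * K * E2 * E3) *
          ((ν k : ℂ) * (2 * Q k j * eval y (Fl Q (sub1 ν k) (List.finRange n) 1)))
        = ((-(1 / (Real.sqrt 2 : ℂ))) ^ (∑ j, ν j) *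
            ((∏ j, ((ν j).factorial : ℂ)) ^ (-(1 / 2 : ℂ))) * (-2 * (ν k : ℂ))) *
            (K * Q j k * (E2 * (eval y (Fl Q (sub1 ν k) (List.finRange n) 1) * E3))) := by
          rw [hQkj]; ring
      _ = (2 * ((1 / (Real.sqrt 2 : ℂ)) * (Real.sqrt (ν k) : ℂ)) *
            ((-(1 / (Real.sqrt 2 : ℂ))) ^ (∑ j, sub1 ν k j) *
              ((∏ j, (((sub1 ν k j)).factorial : ℂ)) ^ (-(1 / 2 : ℂ))))) *
            (K * Q j k * (E2 * (eval y (Fl Q (sub1 ν k) (List.finRange n) 1) * E3))) := by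
          rw [key]
      _ = _ := by ring
  calc _ = (-(c * E2 * E3)) *
        ∑ k, (ν k : ℂ) * (2 * Q k j * eval y (Fl Q (sub1 ν k) (List.finRange n) 1)) := by ring
    _ = ∑ k, (-(c * E2 * E3)) *
        ((ν k : ℂ) * (2 * Q k j * eval y (Fl Q (sub1 ν k) (List.finRange n) 1))) := by
        rw [Finset.mul_sum]
    _ = ∑ k, 2 * (Q j k * phiV Θ ν y k) := Finset.sum_congr rfl fun k _ => hfinal k
    _ = _ := (Finset.mul_sum _ _ _).symm
end
end

section
/- Let n ≥ 1, let Θ ∈ ℂ^{n×n} be symmetric with positive definite real part, and let ν ∈ ℕⁿ. Then for every r ∈ ℝⁿ the gradient (as a column vector) of HG_Θ^ν satisfies: ∇_r HG_Θ^ν(r) = Θ⁻¹·(2·φ_ν(r) − r·HG_Θ^ν(r)). -/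
open scoped BigOperators
open MeasureTheory Matrix

noncomputable section

namespace AHGAux
open MvPolynomial Matrix AHGPaper

variable {n : ℕ}

lemma pderiv_comm (i j : Fin n) (p : MvPolynomial (Fin n) ℂ) :
    pderiv i (pderiv j p) = pderiv j (pderiv i p) := by
  induction p using MvPolynomial.induction_on with
  | C a => simp [pderiv_C]
  | add p q hp hq => simp [map_add, hp, hq]
  | mul_X p k hp =>
    by_cases hki : k = i <;> by_cases hkj : k = j <;>
      simp [pderiv_mul, map_add, hp, hki, hkj, Pi.single_apply, apply_ite (pderiv i),
        apply_ite (pderiv j), map_zero] <;> ring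

lemma hasDerivAt_eval_update (P : MvPolynomial (Fin n) ℂ) (x : Fin n → ℂ) (j : Fin n) :
    HasDerivAt (fun t => eval (Function.update x j t) P) (eval x (pderiv j P)) (x j) := by
  induction P using MvPolynomial.induction_on with
  | C a => simpa [pderiv_C] using hasDerivAt_const (x j) a
  | add p q hp hq => simp only [map_add, eval_add]; exact hp.add hq
  | mul_X p k hp =>
    by_cases hk : k = j
    · subst hk
      have h := hp.mul (hasDerivAt_id (x k))
      have hfun : (fun t => eval (Function.update x k t) (p * X k)) =
          fun t => eval (Function.update x k t) p * t := by
        funext t; simp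
      rw [hfun]
      refine h.congr_deriv ?_
      simp [pderiv_mul, Function.update_eq_self]
      ring
    · have h := hp.mul_const (x k)
      have hfun : (fun t => eval (Function.update x j t) (p * X k)) =
          fun t => eval (Function.update x j t) p * x k := by
        funext t; simp [Function.update_of_ne hk]
      rw [hfun]
      refine h.congr_deriv ?_
      simp [pderiv_mul, pderiv_X_of_ne hk]
      ring

noncomputable def QP (A : Matrix (Fin n) (Fin n) ℂ) : MvPolynomial (Fin n) ℂ :=
  ∑ i, ∑ k, C (A i k) * X i * X k

lemma eval_QP (A : Matrix (Fin n) (Fin n) ℂ) (x : Fin n → ℂ) :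
    eval x (QP A) = x ⬝ᵥ A.mulVec x := by
  simp only [QP, map_sum, eval_mul, eval_C, eval_X, dotProduct, Matrix.mulVec,
    Finset.mul_sum]
  refine Finset.sum_congr rfl fun i _ => Finset.sum_congr rfl fun k _ => by ring

lemma pderiv_QP (A : Matrix (Fin n) (Fin n) ℂ) (hA : A.IsSymm) (j : Fin n) :
    pderiv j (QP A) = ∑ k, C (2 * A j k) * X k := by
  have hsym : ∀ i k, A i k = A k i := fun i k => hA.apply k i
  have h1 : pderiv j (QP A) = ∑ i, ∑ k, ((if i = j then C (A i k) * X k else 0) +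
      (if k = j then C (A i k) * X i else 0)) := by
    simp only [QP, map_sum, mul_assoc, pderiv_C_mul, pderiv_mul, pderiv_X, Pi.single_apply]
    refine Finset.sum_congr rfl fun i _ => Finset.sum_congr rfl fun k _ => ?_
    by_cases hi : i = j <;> by_cases hk : k = j <;> simp [hi, hk] <;> ring
  rw [h1]
  simp only [Finset.sum_add_distrib]
  rw [Finset.sum_comm (f := fun i k => if k = j then C (A i k) * X i else 0)]
  have e1 : ∀ i, (∑ k, if i = j then C (A i k) * X k else 0)
      = if i = j then ∑ k, C (A i k) * X k else 0 := fun i => by split <;> simp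
  have e2 : ∀ k, (∑ i, if k = j then C (A i k) * X i else 0)
      = if k = j then ∑ i, C (A i k) * X i else 0 := fun k => by split <;> simp
  simp only [e1, e2, Finset.sum_ite_eq', Finset.mem_univ, if_true]
  rw [← Finset.sum_add_distrib]
  refine Finset.sum_congr rfl fun k _ => ?_
  rw [hsym k j, ← add_mul, ← map_add, two_mul]

/-- second partial of the quadratic form is constant -/
lemma pderiv_pderiv_QP (A : Matrix (Fin n) (Fin n) ℂ) (hA : A.IsSymm) (i j : Fin n) :
    pderiv j (pderiv i (QP A)) = C (2 * A j i) := by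
  rw [pderiv_QP A hA i]
  have hsym : ∀ i k, A i k = A k i := fun i k => hA.apply k i
  simp only [map_sum, pderiv_C_mul, pderiv_X, Pi.single_apply]
  have : ∀ k : Fin n, C (2 * A i k) * ((if k = j then (1:MvPolynomial (Fin n) ℂ) else 0)) =
      if k = j then C (2 * A i k) else 0 := fun k => by split <;> simp
  simp only [this, Finset.sum_ite_eq', Finset.mem_univ, if_true, hsym i j]

/-- Gaussian-type functions: polynomial times `exp (c ⬝ quadratic form)`. -/
noncomputable def FF (A : Matrix (Fin n) (Fin n) ℂ) (c : ℂ) (P : MvPolynomial (Fin n) ℂ) :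
    (Fin n → ℂ) → ℂ :=
  fun x => eval x P * Complex.exp (c * eval x (QP A))

/-- The operator on polynomials corresponding to `cpderiv` on `FF`. -/
noncomputable def Dop (A : Matrix (Fin n) (Fin n) ℂ) (c : ℂ) (j : Fin n)
    (P : MvPolynomial (Fin n) ℂ) : MvPolynomial (Fin n) ℂ :=
  pderiv j P + C c * pderiv j (QP A) * P

lemma cpderiv_FF (A : Matrix (Fin n) (Fin n) ℂ) (c : ℂ) (j : Fin n)
    (P : MvPolynomial (Fin n) ℂ) :
    cpderiv j (FF A c P) = FF A c (Dop A c j P) := by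
  funext x
  have h1 := hasDerivAt_eval_update P x j
  have h2 := ((hasDerivAt_eval_update (QP A) x j).const_mul c).cexp
  have h3 := h1.mul h2
  have h4 : cpderiv j (FF A c P) x = deriv (fun t => eval (Function.update x j t) P *
      Complex.exp (c * eval (Function.update x j t) (QP A))) (x j) := rfl
  rw [h4]; refine h3.deriv.trans ?_
  simp only [FF, Dop, map_add, eval_mul, eval_C, Function.update_eq_self]
  ring

lemma iterate_cpderiv_FF (A : Matrix (Fin n) (Fin n) ℂ) (c : ℂ) (j : Fin n) (m : ℕ) :
    ∀ P, (cpderiv j)^[m] (FF A c P) = FF A c ((Dop A c j)^[m] P) := by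
  induction m with
  | zero => intro P; rfl
  | succ m ih =>
    intro P
    rw [Function.iterate_succ_apply, Function.iterate_succ_apply, cpderiv_FF, ih]

noncomputable def DPl (A : Matrix (Fin n) (Fin n) ℂ) (c : ℂ) (l : List (Fin n))
    (ν : Fin n → ℕ) (P : MvPolynomial (Fin n) ℂ) : MvPolynomial (Fin n) ℂ :=
  l.foldr (fun j Q => (Dop A c j)^[ν j] Q) P

lemma foldr_cpderiv_FF (A : Matrix (Fin n) (Fin n) ℂ) (c : ℂ) (l : List (Fin n))
    (ν : Fin n → ℕ) (P : MvPolynomial (Fin n) ℂ) :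
    l.foldr (fun j g => (cpderiv j)^[ν j] g) (FF A c P) = FF A c (DPl A c l ν P) := by
  induction l with
  | nil => rfl
  | cons i tl ih => simp only [DPl, List.foldr_cons, ih, iterate_cpderiv_FF]

lemma mpderiv_FF (A : Matrix (Fin n) (Fin n) ℂ) (c : ℂ) (ν : Fin n → ℕ)
    (P : MvPolynomial (Fin n) ℂ) :
    mpderiv ν (FF A c P) = FF A c (DPl A c (List.finRange n) ν P) :=
  foldr_cpderiv_FF A c _ ν P

lemma dop_zero (A : Matrix (Fin n) (Fin n) ℂ) (c : ℂ) (j : Fin n) : Dop A c j 0 = 0 := by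
  simp [Dop]

lemma dop_add (A : Matrix (Fin n) (Fin n) ℂ) (c : ℂ) (j : Fin n) (P Q : MvPolynomial (Fin n) ℂ) :
    Dop A c j (P + Q) = Dop A c j P + Dop A c j Q := by
  simp only [Dop, map_add]; ring

lemma dop_C_mul (A : Matrix (Fin n) (Fin n) ℂ) (c a : ℂ) (j : Fin n)
    (P : MvPolynomial (Fin n) ℂ) : Dop A c j (C a * P) = C a * Dop A c j P := by
  simp only [Dop, pderiv_C_mul]; ring

lemma dop_sum (A : Matrix (Fin n) (Fin n) ℂ) (c : ℂ) (j : Fin n) {ι : Type*} (s : Finset ι)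
    (f : ι → MvPolynomial (Fin n) ℂ) :
    Dop A c j (∑ k ∈ s, f k) = ∑ k ∈ s, Dop A c j (f k) := by
  classical
  induction s using Finset.induction with
  | empty => simp [dop_zero]
  | insert _ _ hk ih => simp [Finset.sum_insert hk, dop_add, ih]

lemma pderiv_dop (A : Matrix (Fin n) (Fin n) ℂ) (hA : A.IsSymm) (c : ℂ) (i j : Fin n)
    (P : MvPolynomial (Fin n) ℂ) :
    pderiv j (Dop A c i P) = Dop A c i (pderiv j P) + C (2 * c * A j i) * P := by
  simp only [Dop, map_add, pderiv_mul, pderiv_C_mul, pderiv_C, pderiv_pderiv_QP A hA i j,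
    zero_mul, zero_add]
  rw [pderiv_comm j i P,
    show (C (2 * c * A j i) : MvPolynomial (Fin n) ℂ) = C c * C (2 * A j i) by
      rw [← C_mul]; congr 1; ring]
  ring

lemma dop_comm (A : Matrix (Fin n) (Fin n) ℂ) (hA : A.IsSymm) (c : ℂ) (i j : Fin n)
    (P : MvPolynomial (Fin n) ℂ) :
    Dop A c i (Dop A c j P) = Dop A c j (Dop A c i P) := by
  simp only [Dop, map_add, pderiv_mul, pderiv_C_mul, pderiv_C,
    pderiv_pderiv_QP A hA i j, pderiv_pderiv_QP A hA j i, zero_mul, zero_add]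
  rw [pderiv_comm i j P, hA.apply j i]
  ring

lemma commute_dop (A : Matrix (Fin n) (Fin n) ℂ) (hA : A.IsSymm) (c : ℂ) (i j : Fin n) :
    Function.Commute (Dop A c i) (Dop A c j) := fun P => dop_comm A hA c i j P

lemma dpl_congr (A : Matrix (Fin n) (Fin n) ℂ) (c : ℂ) (l : List (Fin n)) (ν μ : Fin n → ℕ)
    (P : MvPolynomial (Fin n) ℂ) (h : ∀ j ∈ l, ν j = μ j) : DPl A c l ν P = DPl A c l μ P := by
  induction l with
  | nil => rfl
  | cons i tl ih =>
    simp only [DPl, List.foldr_cons] at *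
    rw [ih fun j hj => h j (List.mem_cons_of_mem i hj), h i List.mem_cons_self]

lemma dpl_add_one (A : Matrix (Fin n) (Fin n) ℂ) (hA : A.IsSymm) (c : ℂ) (l : List (Fin n))
    (hl : l.Nodup) (j : Fin n) (hj : j ∈ l) (ν : Fin n → ℕ) (P : MvPolynomial (Fin n) ℂ) :
    DPl A c l (fun m => ν m + if m = j then 1 else 0) P = Dop A c j (DPl A c l ν P) := by
  induction l with
  | nil => simp at hj
  | cons i tl ih =>
    rcases List.mem_cons.mp hj with h | h
    · subst h
      have hnot : j ∉ tl := (List.nodup_cons.mp hl).1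
      simp only [DPl, List.foldr_cons]
      have e1 : DPl A c tl (fun m => ν m + if m = j then 1 else 0) P = DPl A c tl ν P := by
        refine dpl_congr A c tl _ _ P fun m hm => ?_
        have : m ≠ j := fun hmj => hnot (hmj ▸ hm)
        simp [this]
      simp only [DPl] at e1
      rw [e1]
      simp [Function.iterate_succ_apply']
    · have hne : i ≠ j := by
        rintro rfl; exact (List.nodup_cons.mp hl).1 h
      have ih' := ih (List.nodup_cons.mp hl).2 h
      simp only [DPl, List.foldr_cons] at *
      rw [if_neg hne, add_zero, ih', ← ((commute_dop A hA c j i).iterate_right (ν i)) _]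

/-- `Qp A c ν` : the polynomial with `mpderiv ν (gaussian) = Qp ⬝ gaussian`. -/
noncomputable def Qp (A : Matrix (Fin n) (Fin n) ℂ) (c : ℂ) (ν : Fin n → ℕ) :
    MvPolynomial (Fin n) ℂ :=
  DPl A c (List.finRange n) ν 1

lemma qp_add_one (A : Matrix (Fin n) (Fin n) ℂ) (hA : A.IsSymm) (c : ℂ) (j : Fin n)
    (ν : Fin n → ℕ) :
    Qp A c (fun m => ν m + if m = j then 1 else 0) = Dop A c j (Qp A c ν) :=
  dpl_add_one A hA c _ (List.nodup_finRange n) j (List.mem_finRange j) ν 1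

lemma qp_zero_of (A : Matrix (Fin n) (Fin n) ℂ) (c : ℂ) (ν : Fin n → ℕ) (h : ∀ m, ν m = 0) :
    Qp A c ν = 1 := by
  unfold Qp
  induction (List.finRange n) with
  | nil => rfl
  | cons i tl ih => simp only [DPl, List.foldr_cons] at *; rw [h i]; simpa using ih

lemma mi_up (ν : Fin n → ℕ) (i : Fin n) (hi : ν i ≠ 0) :
    (fun m => (ν m - if m = i then 1 else 0) + if m = i then 1 else 0) = ν := by
  funext m
  by_cases hm : m = i
  · subst hm; simp; omega
  · simp [hm]

lemma mi_sum (ν : Fin n → ℕ) (i : Fin n) (hi : ν i ≠ 0) :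
    (∑ m, (ν m - if m = i then 1 else 0)) + 1 = ∑ m, ν m := by
  conv_rhs => rw [← mi_up ν i hi]
  rw [Finset.sum_add_distrib]
  simp

lemma mi_swap (ν : Fin n → ℕ) (i k : Fin n) (hi : ν i ≠ 0)
    (hk : ν k - (if k = i then 1 else 0) ≠ 0) :
    (fun m => ((ν m - if m = i then 1 else 0) - if m = k then 1 else 0) +
        if m = i then 1 else 0) = fun m => ν m - if m = k then 1 else 0 := by
  funext m
  by_cases h1 : m = i
  · subst h1
    by_cases h2 : m = k
    · subst h2; simp at hk ⊢; omega
    · simp [h2] at hk ⊢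
      omega
  · simp [h1]

lemma mi_self (ν : Fin n → ℕ) (i : Fin n) (hi : ν i ≠ 0) :
    (fun m => (ν m - if m = i then 1 else 0) + if m = i then 1 else 0) = ν :=
  mi_up ν i hi

lemma pderiv_qp (A : Matrix (Fin n) (Fin n) ℂ) (hA : A.IsSymm) (c : ℂ) (ν : Fin n → ℕ)
    (j : Fin n) :
    pderiv j (Qp A c ν) = ∑ k, C (2 * c * A j k * ((ν k : ℕ) : ℂ)) *
      Qp A c (fun m => ν m - if m = k then 1 else 0) := by
  suffices H : ∀ N (ν : Fin n → ℕ), (∑ m, ν m) = N → ∀ j, pderiv j (Qp A c ν) =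
      ∑ k, C (2 * c * A j k * ((ν k : ℕ) : ℂ)) *
        Qp A c (fun m => ν m - if m = k then 1 else 0) by
    exact H _ ν rfl j
  intro N
  induction N with
  | zero =>
    intro ν hν j
    have hz : ∀ m, ν m = 0 := fun m =>
      (Finset.sum_eq_zero_iff.mp hν) m (Finset.mem_univ m)
    rw [qp_zero_of A c ν hz]
    simp [hz, pderiv_one]
  | succ N ih =>
    intro ν hν j
    have hex : ∃ i, ν i ≠ 0 := by
      by_contra hcon
      push_neg at hcon
      simp [hcon] at hν
    obtain ⟨i, hi⟩ := hex
    have hs : ∑ m, (ν m - if m = i then 1 else 0) = N := by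
      have := mi_sum ν i hi
      omega
    have key : pderiv j (Qp A c ν) =
        Dop A c i (pderiv j (Qp A c (fun m => ν m - if m = i then 1 else 0))) +
        C (2 * c * A j i) * Qp A c (fun m => ν m - if m = i then 1 else 0) := by
      conv_lhs => rw [← mi_up ν i hi, qp_add_one A hA c i, pderiv_dop A hA c i j]
    rw [key, ih _ hs j, dop_sum]
    have term : ∀ k : Fin n,
        Dop A c i (C (2 * c * A j k * (((ν k - if k = i then 1 else 0) : ℕ) : ℂ)) *
          Qp A c (fun m => (ν m - if m = i then 1 else 0) - if m = k then 1 else 0))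
        = C (2 * c * A j k * (((ν k - if k = i then 1 else 0) : ℕ) : ℂ)) *
          Qp A c (fun m => ν m - if m = k then 1 else 0) := by
      intro k
      rw [dop_C_mul]
      by_cases hk : ν k - (if k = i then 1 else 0) = 0
      · simp [hk]
      · congr 1
        rw [← qp_add_one A hA c i, mi_swap ν i k hi hk]
    simp only [term]
    have split : ∀ k : Fin n, C (2 * c * A j k * ((ν k : ℕ) : ℂ)) *
          Qp A c (fun m => ν m - if m = k then 1 else 0)
        = C (2 * c * A j k * (((ν k - if k = i then 1 else 0) : ℕ) : ℂ)) *
            Qp A c (fun m => ν m - if m = k then 1 else 0) +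
          (if k = i then C (2 * c * A j i) *
            Qp A c (fun m => ν m - if m = i then 1 else 0) else 0) := by
      intro k
      by_cases hk : k = i
      · subst hk
        simp only [eq_self_iff_true, if_true]
        have h1 : (ν k : ℂ) = ((ν k - 1 : ℕ) : ℂ) + 1 := by
          push_cast [Nat.cast_sub (Nat.one_le_iff_ne_zero.mpr hi)]
          ring
        rw [h1, show 2 * c * A j k * (((ν k - 1 : ℕ) : ℂ) + 1)
            = 2 * c * A j k * ((ν k - 1 : ℕ) : ℂ) + 2 * c * A j k by ring, map_add]
        ring
      · simp [hk]
    rw [Finset.sum_congr rfl fun k _ => split k, Finset.sum_add_distrib]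
    simp

end AHGAux

namespace AHGAux
open MvPolynomial Matrix AHGPaper

variable {n : ℕ}

/-- The scalar constant in front of `HG`. -/
noncomputable def Kc (Θ : Matrix (Fin n) (Fin n) ℂ) (ν : Fin n → ℕ) : ℂ :=
  (-(1 / (Real.sqrt 2 : ℂ))) ^ (∑ j, ν j) *
    ((∏ j, ((ν j).factorial : ℂ)) ^ (-(1 / 2 : ℂ))) *
    (((Real.pi : ℂ) ^ n * Θ.det) ^ (-(1 / 4 : ℂ)))

lemma HG_eq (Θ : Matrix (Fin n) (Fin n) ℂ) (ν : Fin n → ℕ) :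
    HG Θ ν = fun x => Kc Θ ν * FF Θ⁻¹ (-(1/2)) (Qp Θ⁻¹ (-1) ν) x := by
  funext x
  have hg : (fun y : Fin n → ℂ => Complex.exp (-(y ⬝ᵥ Θ⁻¹.mulVec y))) = FF Θ⁻¹ (-1) 1 := by
    funext y
    simp [FF, eval_QP, neg_one_mul]
  have hmp : mpderiv ν (FF Θ⁻¹ (-1) (1 : MvPolynomial (Fin n) ℂ)) x
      = FF Θ⁻¹ (-1) (Qp Θ⁻¹ (-1) ν) x := by
    rw [mpderiv_FF]; rfl
  simp only [HG, Kc, hg, hmp, FF]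
  rw [eval_QP]
  set q := x ⬝ᵥ Θ⁻¹.mulVec x
  set K := (-(1 / (Real.sqrt 2 : ℂ))) ^ (∑ j, ν j) *
    ((∏ j, ((ν j).factorial : ℂ)) ^ (-(1 / 2 : ℂ))) *
    (((Real.pi : ℂ) ^ n * Θ.det) ^ (-(1 / 4 : ℂ)))
  set ev := eval x (Qp Θ⁻¹ (-1) ν)
  rw [show K * Complex.exp (1/2 * q) * (ev * Complex.exp (-1 * q))
      = K * (ev * (Complex.exp (1/2 * q) * Complex.exp (-1 * q))) from by ring,
    ← Complex.exp_add, show (1/2 : ℂ) * q + -1 * q = -(1/2) * q from by ring]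

lemma key_const (Θ : Matrix (Fin n) (Fin n) ℂ) (ν : Fin n → ℕ) (k : Fin n) :
    2 * ((1 / (Real.sqrt 2 : ℂ)) * ((Real.sqrt (ν k) : ℝ) : ℂ)) *
      Kc Θ (fun m => ν m - if m = k then 1 else 0)
    = -2 * ((ν k : ℕ) : ℂ) * Kc Θ ν := by
  by_cases h0 : ν k = 0
  · have hμ : (fun m => ν m - if m = k then 1 else 0) = ν := by
      funext m
      by_cases hm : m = k <;> simp [hm] <;> omega
    simp [hμ, h0]
  · have hsum : (∑ m, (ν m - if m = k then 1 else 0)) + 1 = ∑ m, ν m := mi_sum ν k h0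
    have hprodN : (∏ m, Nat.factorial (ν m))
        = ν k * ∏ m, Nat.factorial (ν m - if m = k then 1 else 0) := by
      have hterm : ∀ m : Fin n, Nat.factorial (ν m)
          = (if m = k then ν k else 1) * Nat.factorial (ν m - if m = k then 1 else 0) := by
        intro m
        by_cases hm : m = k
        · subst hm
          simp only [if_pos rfl]
          exact (Nat.mul_factorial_pred h0).symm
        · simp [hm]
      rw [Finset.prod_congr rfl fun m _ => hterm m, Finset.prod_mul_distrib,
        Finset.prod_ite_eq', if_pos (Finset.mem_univ k)]
    have hFν : (∏ j, ((ν j).factorial : ℂ))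
        = ((ν k : ℕ) : ℂ) * ((∏ m, Nat.factorial (ν m - if m = k then 1 else 0) : ℕ) : ℂ) := by
      rw [← Nat.cast_prod, hprodN]
      push_cast
      ring
    have hFμc : (∏ j, (((ν j - if j = k then 1 else 0)).factorial : ℂ))
        = ((∏ m, Nat.factorial (ν m - if m = k then 1 else 0) : ℕ) : ℂ) := by
      rw [← Nat.cast_prod]
    have hsplit : (((ν k : ℕ) : ℂ) * ((∏ m, Nat.factorial (ν m - if m = k then 1 else 0) : ℕ) : ℂ))
          ^ (-(1/2 : ℂ))
        = ((ν k : ℕ) : ℂ) ^ (-(1/2 : ℂ)) *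
          ((∏ m, Nat.factorial (ν m - if m = k then 1 else 0) : ℕ) : ℂ) ^ (-(1/2 : ℂ)) := by
      have := Complex.mul_cpow_ofReal_nonneg
        (Nat.cast_nonneg (ν k) : (0:ℝ) ≤ ((ν k : ℕ) : ℝ))
        (Nat.cast_nonneg (∏ m, Nat.factorial (ν m - if m = k then 1 else 0))) (-(1/2 : ℂ))
      simpa using this
    have hνpow : ((ν k : ℕ) : ℂ) ^ (-(1/2 : ℂ)) = (((Real.sqrt (ν k))⁻¹ : ℝ) : ℂ) := by
      have h1 : ((ν k : ℝ) ^ (-(1/2) : ℝ) : ℝ) = (Real.sqrt (ν k))⁻¹ := by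
        rw [Real.rpow_neg (Nat.cast_nonneg _), ← Real.sqrt_eq_rpow]
      calc ((ν k : ℕ) : ℂ) ^ (-(1/2 : ℂ))
          = (((ν k : ℕ) : ℝ) : ℂ) ^ (((-(1/2) : ℝ)) : ℂ) := by norm_num
        _ = ((((ν k : ℕ) : ℝ) ^ (-(1/2) : ℝ) : ℝ) : ℂ) :=
            (Complex.ofReal_cpow (Nat.cast_nonneg _) _).symm
        _ = _ := by rw [h1]
    have hpow : (-(1 / (Real.sqrt 2 : ℂ))) ^ (∑ j, ν j)
        = (-(1 / (Real.sqrt 2 : ℂ))) ^ (∑ m, (ν m - if m = k then 1 else 0)) *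
          (-(1 / (Real.sqrt 2 : ℂ))) := by
      rw [← hsum, pow_succ]
    have hs0 : (0:ℝ) < Real.sqrt (ν k) :=
      Real.sqrt_pos.mpr (by exact_mod_cast Nat.pos_of_ne_zero h0)
    have hsqC : ((Real.sqrt (ν k) : ℝ) : ℂ) * ((Real.sqrt (ν k) : ℝ) : ℂ) = ((ν k : ℕ) : ℂ) := by
      rw [← Complex.ofReal_mul, Real.mul_self_sqrt (Nat.cast_nonneg _)]
      push_cast
      rfl
    have hneC : ((Real.sqrt (ν k) : ℝ) : ℂ) ≠ 0 := Complex.ofReal_ne_zero.mpr (ne_of_gt hs0)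
    have hinv : ((Real.sqrt (ν k) : ℝ) : ℂ) * (((Real.sqrt (ν k) : ℝ) : ℂ))⁻¹ = 1 :=
      mul_inv_cancel₀ hneC
    simp only [Kc, hFν, hFμc, hsplit, hνpow, hpow, Complex.ofReal_inv]
    set B := (-(1 / (Real.sqrt 2 : ℂ))) ^ (∑ m, (ν m - if m = k then 1 else 0)) *
      ((∏ m, Nat.factorial (ν m - if m = k then 1 else 0) : ℕ) : ℂ) ^ (-(1/2 : ℂ)) *
      (((Real.pi : ℂ) ^ n * Θ.det) ^ (-(1 / 4 : ℂ))) with hB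
    linear_combination (-2 * B * (1 / (Real.sqrt 2 : ℂ)) * ((Real.sqrt (ν k) : ℝ) : ℂ)) * hinv +
      (2 * B * (1 / (Real.sqrt 2 : ℂ)) * (((Real.sqrt (ν k) : ℝ) : ℂ))⁻¹) * hsqC

end AHGAux


open AHGPaper
/-- gradient of the AHG function. -/
theorem ahg_gradient (n : ℕ) (hn : 1 ≤ n) (Θ : Matrix (Fin n) (Fin n) ℂ)
    (hsym : Θ.IsSymm) (hpd : (Θ.map Complex.re).PosDef)
    (ν : Fin n → ℕ) (r : Fin n → ℝ) :
    (fun j => cpderiv j (HG Θ ν) (fun i => (r i : ℂ))) =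
      Θ⁻¹.mulVec (fun k =>
        2 * phiV Θ ν (fun i => (r i : ℂ)) k -
          (r k : ℂ) * HG Θ ν (fun i => (r i : ℂ))) := by
  classical
  have hA : (Θ⁻¹).IsSymm := by
    have h1 : Θ⁻¹ᵀ = Θᵀ⁻¹ := Matrix.transpose_nonsing_inv Θ
    unfold Matrix.IsSymm
    rw [h1, hsym.eq]
  funext j
  set rC : Fin n → ℂ := fun i => (r i : ℂ) with hrC
  set E : ℂ := Complex.exp (-(1/2) * (rC ⬝ᵥ Θ⁻¹.mulVec rC)) with hE
  have hFFev : ∀ P : MvPolynomial (Fin n) ℂ,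
      AHGAux.FF Θ⁻¹ (-(1/2)) P rC = MvPolynomial.eval rC P * E := by
    intro P
    simp only [AHGAux.FF, AHGAux.eval_QP, hE]
  have hHG : ∀ μ : Fin n → ℕ, HG Θ μ rC =
      AHGAux.Kc Θ μ * (MvPolynomial.eval rC (AHGAux.Qp Θ⁻¹ (-1) μ) * E) := by
    intro μ
    rw [AHGAux.HG_eq Θ μ]
    simp only [hFFev]
  have hL : cpderiv j (HG Θ ν) rC =
      AHGAux.Kc Θ ν *
        (MvPolynomial.eval rC
          (AHGAux.Dop Θ⁻¹ (-(1/2)) j (AHGAux.Qp Θ⁻¹ (-1) ν)) * E) := by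
    rw [AHGAux.HG_eq Θ ν]
    have h2 : cpderiv j (fun x => AHGAux.Kc Θ ν *
          AHGAux.FF Θ⁻¹ (-(1/2)) (AHGAux.Qp Θ⁻¹ (-1) ν) x) rC
        = AHGAux.Kc Θ ν * cpderiv j (AHGAux.FF Θ⁻¹ (-(1/2)) (AHGAux.Qp Θ⁻¹ (-1) ν)) rC := by
      unfold cpderiv
      exact deriv_const_mul_field _
    rw [h2, AHGAux.cpderiv_FF, hFFev]
  rw [hL]
  have hDopev : MvPolynomial.eval rC (AHGAux.Dop Θ⁻¹ (-(1/2)) j (AHGAux.Qp Θ⁻¹ (-1) ν))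
      = (∑ k, 2 * (-1) * Θ⁻¹ j k * ((ν k : ℕ) : ℂ) *
          MvPolynomial.eval rC (AHGAux.Qp Θ⁻¹ (-1) (fun m => ν m - if m = k then 1 else 0))) +
        (-(1/2)) * (∑ k, 2 * Θ⁻¹ j k * rC k) *
          MvPolynomial.eval rC (AHGAux.Qp Θ⁻¹ (-1) ν) := by
    simp only [AHGAux.Dop, map_add, MvPolynomial.eval_mul, MvPolynomial.eval_C,
      AHGAux.pderiv_qp Θ⁻¹ hA (-1) ν j, AHGAux.pderiv_QP Θ⁻¹ hA j, map_sum,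
      MvPolynomial.eval_X]
  rw [hDopev]
  have hR : Θ⁻¹.mulVec (fun k => 2 * phiV Θ ν rC k - rC k * HG Θ ν rC) j
      = ∑ k, Θ⁻¹ j k * (2 * ((1 / (Real.sqrt 2 : ℂ)) * ((Real.sqrt (ν k) : ℝ) : ℂ) *
          (AHGAux.Kc Θ (fun m => ν m - if m = k then 1 else 0) *
            (MvPolynomial.eval rC (AHGAux.Qp Θ⁻¹ (-1) (fun m => ν m - if m = k then 1 else 0)) * E))) -
        rC k * (AHGAux.Kc Θ ν * (MvPolynomial.eval rC (AHGAux.Qp Θ⁻¹ (-1) ν) * E))) := by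
    simp only [Matrix.mulVec, dotProduct]
    refine Finset.sum_congr rfl fun k _ => ?_
    rw [show phiV Θ ν rC k = (1 / (Real.sqrt 2 : ℂ)) * ((Real.sqrt (ν k) : ℝ) : ℂ) *
        HG Θ (fun m => ν m - if m = k then 1 else 0) rC from rfl, hHG, hHG]
  rw [hR]
  simp only [add_mul, mul_add, Finset.sum_mul, Finset.mul_sum]
  rw [← Finset.sum_add_distrib]
  refine Finset.sum_congr rfl fun k _ => ?_
  have hkc := AHGAux.key_const Θ ν k
  linear_combination (-(Θ⁻¹ j k *
    MvPolynomial.eval rC (AHGAux.Qp Θ⁻¹ (-1) (fun m => ν m - if m = k then 1 else 0)) * E)) * hkc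
end
end
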